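/- Let μ be a real number with 1 < μ ≤ 2 and set γ = (1+μ²)/μ, a = μ/(1+μ²), b = μ²/(1+μ²), and c = (1+μ²−μ)/(1+μ²). Then every point of the invariant set Λ = {a, b, c} of the logistic-tent IFS {f_γ, T_μ} is a periodic point of f_γ or of T_μ: c is a fixed point of f_γ (f_γ(c) = c), while a and b are period-2 points of T_μ (T_μ(T_μ(a)) = a and T_μ(T_μ(b)) = b with T_μ(a) ≠ a and T_μ(b) ≠ b). Hence, in contrast to the 3-point toss-and-catch of the logistic IFS, this invariant set contains no bridging point. -/

import Mathlib

/-- The logistic map `f_γ(x) = γ·x·(1−x)`. -/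
def logistic (γ x : ℝ) : ℝ := γ * x * (1 - x)

/-- The tent map `T_μ(x) = μ·x` for `x < 1/2` and `T_μ(x) = μ·(1−x)` for `x ≥ 1/2`. -/
noncomputable def tent (μ x : ℝ) : ℝ := if x < 1 / 2 then μ * x else μ * (1 - x)

/-- For `1 < μ ≤ 2` and `γ = (1+μ²)/μ`, every point of the 3-point invariant set
`Λ = {a, b, c}` of the logistic-tent IFS is a periodic point of `f_γ` or of `T_μ`:
`c` is a fixed point of `f_γ`, while `a` and `b` are period-2 points of `T_μ`.
Hence this invariant set contains no bridging point. -/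
theorem logistic_tent_IFS_three_point_no_bridging (μ γ : ℝ)
    (hμ1 : 1 < μ) (hμ2 : μ ≤ 2) (hγ : γ = (1 + μ ^ 2) / μ)
    (a b c : ℝ)
    (ha : a = μ / (1 + μ ^ 2)) (hb : b = μ ^ 2 / (1 + μ ^ 2))
    (hc : c = (1 + μ ^ 2 - μ) / (1 + μ ^ 2)) :
    logistic γ c = c ∧
    tent μ (tent μ a) = a ∧ tent μ (tent μ b) = b ∧
    tent μ a ≠ a ∧ tent μ b ≠ b ∧
    ∀ x ∈ ({a, b, c} : Set ℝ),
      (∃ n : ℕ, 1 ≤ n ∧ (logistic γ)^[n] x = x) ∨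
      (∃ n : ℕ, 1 ≤ n ∧ (tent μ)^[n] x = x) := by
  have hμ0 : (0:ℝ) < μ := by linarith
  have hD : (0:ℝ) < 1 + μ ^ 2 := by positivity
  have haLt : a < 1 / 2 := by
    rw [ha, div_lt_iff₀ hD]; nlinarith [sq_nonneg (μ - 1)]
  have hbGe : ¬ b < 1 / 2 := by
    rw [hb, not_lt, le_div_iff₀ hD]; nlinarith
  have hta : tent μ a = b := by
    rw [tent, if_pos haLt, ha, hb]; field_simp
  have htb : tent μ b = a := by
    rw [tent, if_neg hbGe, ha, hb]; field_simp; ring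
  have hlc : logistic γ c = c := by
    rw [logistic, hγ, hc]; field_simp; ring
  have hab : a ≠ b := by
    rw [ha, hb]; intro h; rw [div_eq_div_iff hD.ne' hD.ne'] at h; nlinarith [mul_pos (mul_pos hμ0 (sub_pos.mpr hμ1)) hD]
  refine ⟨hlc, by rw [hta, htb], by rw [htb, hta], by rw [hta]; exact hab.symm,
    by rw [htb]; exact hab, ?_⟩
  intro x hx
  rcases hx with rfl | rfl | rfl
  · exact Or.inr ⟨2, by norm_num, by simp [Function.iterate_succ_apply', hta, htb]⟩
  · exact Or.inr ⟨2, by norm_num, by simp [Function.iterate_succ_apply', hta, htb]⟩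
  · exact Or.inl ⟨1, le_refl 1, by simp [hlc]⟩
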